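/- arXiv:2206.12761 — 5 statements merged into one kernel-verified Lean document; each statement's English description precedes it below -/
import Mathlib

section
/- Let p ∈ (0,1), T_c > 0, a > 0, Θ > 0, and μ ∈ (0,1). Let V : ℝ → ℝ be differentiable with V(t) ≥ 0 for all t ≥ 0, and suppose that for all t ≥ 0 the derivative satisfies V'(t) ≤ -(1/(p·T_c))·e^{a·V(t)^p}·V(t)^{1-p} + Θ. Then there exists a time t* ∈ [0, T_c/(a·μ)] such that e^{a·V(t*)^p}·V(t*)^{1-p} ≤ p·T_c·Θ/(1-μ). (Practical predefined-time stability: the trajectory reaches the residual set {x : e^{a·V(x)^p}·V(x)^{1-p} ≤ p·T_c·Θ/(1-μ)} within the predefined time T_c/(a·μ).) -/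
theorem practical_predefined_time_stability
    (p T_c a Θ μ : ℝ) (hp : p ∈ Set.Ioo (0 : ℝ) 1) (hT : 0 < T_c) (ha : 0 < a)
    (hΘ : 0 < Θ) (hμ : μ ∈ Set.Ioo (0 : ℝ) 1)
    (V : ℝ → ℝ) (hV : Differentiable ℝ V) (hVnn : ∀ t ≥ 0, 0 ≤ V t)
    (hdV : ∀ t ≥ 0, deriv V t ≤
      -(1 / (p * T_c)) * Real.exp (a * (V t) ^ p) * (V t) ^ (1 - p) + Θ) :
    ∃ t ∈ Set.Icc (0 : ℝ) (T_c / (a * μ)),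
      Real.exp (a * (V t) ^ p) * (V t) ^ (1 - p) ≤ p * T_c * Θ / (1 - μ) := by
  by_contra hcon
  push_neg at hcon
  obtain ⟨hp0, hp1⟩ := hp
  obtain ⟨hμ0, hμ1⟩ := hμ
  have h1μ : (0:ℝ) < 1 - μ := by linarith
  have h1p : (0:ℝ) < 1 - p := by linarith
  have haμ : 0 < a * μ := mul_pos ha hμ0
  have hpT : 0 < p * T_c := mul_pos hp0 hT
  set T : ℝ := T_c / (a * μ) with hTdef
  have hTpos : 0 < T := div_pos hT haμ
  -- V is positive on [0,T]
  have hVpos : ∀ t ∈ Set.Icc (0:ℝ) T, 0 < V t := by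
    intro t ht
    rcases lt_or_eq_of_le (hVnn t ht.1) with h | h
    · exact h
    · exfalso
      have := hcon t ht
      rw [← h, Real.zero_rpow h1p.ne', mul_zero] at this
      have hB : 0 < p * T_c * Θ / (1 - μ) := by positivity
      linarith
  -- the function g
  set g : ℝ → ℝ := fun t => Real.exp (-(a * (V t) ^ p)) - (a * μ / T_c) * t with hgdef
  have hgmono : MonotoneOn g (Set.Icc 0 T) := by
    have hconv : Convex ℝ (Set.Icc (0:ℝ) T) := convex_Icc 0 T
    have hcont : ContinuousOn g (Set.Icc 0 T) := by
      apply ContinuousOn.sub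
      · apply ContinuousOn.rexp
        apply ContinuousOn.neg
        apply ContinuousOn.mul continuousOn_const
        intro t ht
        exact ((Real.continuousAt_rpow_const (V t) p (Or.inl (hVpos t ht).ne')).comp
          (hV t).continuousAt).continuousWithinAt
      · exact (continuous_const.mul continuous_id).continuousOn
    have hderivkey : ∀ x ∈ interior (Set.Icc (0:ℝ) T),
        HasDerivAt g (Real.exp (-(a * (V x) ^ p)) *
          (-(a * (p * (V x) ^ (p - 1) * deriv V x))) - a * μ / T_c) x := by
      intro x hx
      have h1 : HasDerivAt (fun t => (V t) ^ p) (p * (V x) ^ (p - 1) * deriv V x) x := by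
        have hx' : x ∈ Set.Icc (0:ℝ) T := interior_subset hx
        exact (Real.hasDerivAt_rpow_const (Or.inl (hVpos x hx').ne')).comp x
          (hV x).hasDerivAt
      have h2 : HasDerivAt (fun t => -(a * (V t) ^ p))
          (-(a * (p * (V x) ^ (p - 1) * deriv V x))) x := (h1.const_mul a).neg
      have h3 := (Real.hasDerivAt_exp (-(a * (V x) ^ p))).comp x h2
      have h4 : HasDerivAt (fun t : ℝ => a * μ / T_c * t) (a * μ / T_c) x := by
        simpa using (hasDerivAt_id x).const_mul (a * μ / T_c)
      exact h3.sub h4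
    apply monotoneOn_of_deriv_nonneg hconv hcont
    · intro x hx
      exact (hderivkey x hx).differentiableAt.differentiableWithinAt
    · intro x hx
      rw [(hderivkey x hx).deriv]
      rw [interior_Icc] at hx
      set c := Real.exp (-(a * (V x) ^ p)) with hc
      set E := Real.exp (a * (V x) ^ p) with hE
      set W := (V x) ^ (p - 1) with hW
      set S := E * (V x) ^ (1 - p) with hS
      have hVx : 0 < V x := hVpos x ⟨hx.1.le, hx.2.le⟩
      have hcpos : 0 < c := Real.exp_pos _
      have hEpos : 0 < E := Real.exp_pos _
      have hWpos : 0 < W := Real.rpow_pos_of_pos hVx _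
      have hV1p : 0 < (V x) ^ (1 - p) := Real.rpow_pos_of_pos hVx _
      have hcE : c * E = 1 := by
        rw [hc, hE, ← Real.exp_add]; simp
      have hWVp : W * (V x) ^ (1 - p) = 1 := by
        rw [hW, ← Real.rpow_add hVx]
        norm_num
      have hcWS : c * W * S = 1 := by
        rw [hS]
        calc c * W * (E * (V x) ^ (1 - p)) = (c * E) * (W * (V x) ^ (1 - p)) := by ring
        _ = 1 := by rw [hcE, hWVp]; ring
      have hB : p * T_c * Θ / (1 - μ) < S := hcon x ⟨hx.1.le, hx.2.le⟩
      have hB' : p * T_c * Θ < S * (1 - μ) := (div_lt_iff₀ h1μ).mp hB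
      have hVd := hdV x hx.1.le
      have hSpos : 0 < S := mul_pos hEpos hV1p
      -- deriv V x ≤ -(μ / (p*T_c)) * S
      have hV' : deriv V x ≤ -(μ / (p * T_c)) * S := by
        have h6 : -(1 / (p * T_c)) * E * (V x) ^ (1 - p) = -(1 / (p * T_c)) * S := by
          rw [hS]; ring
        rw [h6] at hVd
        have hΘlt : Θ ≤ (1 - μ) * S / (p * T_c) := by
          rw [le_div_iff₀ hpT]
          nlinarith
        have : -(1 / (p * T_c)) * S + (1 - μ) * S / (p * T_c) = -(μ / (p * T_c)) * S := by
          field_simp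
          ring
        linarith
      have h6 : a * p * c * W * (-(deriv V x)) ≥ a * p * c * W * ((μ / (p * T_c)) * S) := by
        apply mul_le_mul_of_nonneg_left
        · nlinarith
        · positivity
      have h7 : a * p * c * W * ((μ / (p * T_c)) * S) = a * μ / T_c * (c * W * S) := by
        field_simp
      rw [hcWS, mul_one] at h7
      nlinarith [h6, h7]
  -- conclude
  have hg0 : g 0 ≤ g T := hgmono (Set.left_mem_Icc.mpr hTpos.le)
    (Set.right_mem_Icc.mpr hTpos.le) hTpos.le
  have hgT : g T = Real.exp (-(a * (V T) ^ p)) - 1 := by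
    rw [hgdef]
    simp only
    congr 1
    rw [hTdef]
    field_simp
  have hexpT : Real.exp (-(a * (V T) ^ p)) ≤ 1 := by
    rw [Real.exp_le_one_iff]
    have : 0 ≤ (V T) ^ p := Real.rpow_nonneg (hVnn T hTpos.le) p
    nlinarith
  have hg0' : g 0 = Real.exp (-(a * (V 0) ^ p)) := by
    rw [hgdef]; simp
  have : 0 < g 0 := by rw [hg0']; exact Real.exp_pos _
  rw [hgT] at hg0
  linarith
end

section
/- Let p ∈ (0,1), T_c > 0, and a > 0. Let V : ℝ → ℝ be differentiable with V(t) ≥ 0 for all t ≥ 0, and suppose that for all t ≥ 0 the derivative satisfies V'(t) ≤ -(1/(p·T_c))·e^{a·V(t)^p}·V(t)^{1-p}. Then V(t) = 0 for every t ≥ T_c/a. (Predefined-time stability: the settling time is bounded by T_max = T_c/a independently of the initial condition V(0).) -/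
theorem predefined_time_stability
    (p T_c a : ℝ) (hp : p ∈ Set.Ioo (0 : ℝ) 1) (hT : 0 < T_c) (ha : 0 < a)
    (V : ℝ → ℝ) (hV : Differentiable ℝ V) (hVnn : ∀ t ≥ 0, 0 ≤ V t)
    (hdV : ∀ t ≥ 0, deriv V t ≤
      -(1 / (p * T_c)) * Real.exp (a * (V t) ^ p) * (V t) ^ (1 - p)) :
    ∀ t ≥ T_c / a, V t = 0 := by
  obtain ⟨hp0, hp1⟩ := hp
  set T : ℝ := T_c / a with hTdef
  have hTpos : 0 < T := div_pos hT ha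
  -- V is antitone on [0, ∞)
  have hanti : AntitoneOn V (Set.Ici 0) := by
    apply antitoneOn_of_deriv_nonpos (convex_Ici 0) hV.continuous.continuousOn
      (hV.differentiableOn)
    intro x hx
    rw [interior_Ici] at hx
    have hx0 : (0:ℝ) ≤ x := le_of_lt hx
    have h1 := hdV x hx0
    have h2 : 0 ≤ (V x) ^ (1 - p) := Real.rpow_nonneg (hVnn x hx0) _
    have h3 : 0 < Real.exp (a * (V x) ^ p) := Real.exp_pos _
    have h4 : 0 < 1 / (p * T_c) := by positivity
    have h6 : 0 ≤ 1 / (p * T_c) * Real.exp (a * (V x) ^ p) * (V x) ^ (1 - p) := by positivity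
    nlinarith [h1, h6]
  -- main claim: V T = 0
  have hVT : V T = 0 := by
    by_contra hne
    have hVTpos : 0 < V T := lt_of_le_of_ne (hVnn T hTpos.le) (Ne.symm hne)
    have hVpos : ∀ x ∈ Set.Icc (0:ℝ) T, 0 < V x := by
      intro x hx
      have := hanti (Set.mem_Ici.2 hx.1) (Set.mem_Ici.2 hTpos.le) hx.2
      linarith
    -- W = exp (-(a * V^p)) minus linear drift
    set g : ℝ → ℝ := fun t => Real.exp (-(a * (V t) ^ p)) - (a / T_c) * t with hg
    have hderiv : ∀ x ∈ Set.Icc (0:ℝ) T, HasDerivAt g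
        (Real.exp (-(a * (V x) ^ p)) * (-(a * (deriv V x * p * (V x) ^ (p - 1)))) - a / T_c) x := by
      intro x hx
      have h1 : HasDerivAt V (deriv V x) x := (hV x).hasDerivAt
      have h2 : HasDerivAt (fun t => (V t) ^ p) (deriv V x * p * (V x) ^ (p - 1)) x :=
        h1.rpow_const (Or.inl (ne_of_gt (hVpos x hx)))
      have h3 := ((h2.const_mul a).neg).exp
      have h4 : HasDerivAt (fun t : ℝ => (a / T_c) * t) (a / T_c) x := by
        simpa using (hasDerivAt_id x).const_mul (a / T_c)
      exact h3.sub h4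
    have hmono : MonotoneOn g (Set.Icc 0 T) := by
      apply monotoneOn_of_deriv_nonneg (convex_Icc 0 T)
      · apply Continuous.continuousOn
        apply Continuous.sub
        · exact Real.continuous_exp.comp
            (continuous_const.mul (hV.continuous.rpow_const (fun x => Or.inr hp0.le))).neg
        · exact continuous_const.mul continuous_id
      · intro x hx
        rw [interior_Icc] at hx
        exact (hderiv x ⟨hx.1.le, hx.2.le⟩).differentiableAt.differentiableWithinAt
      · intro x hx
        rw [interior_Icc] at hx
        have hx' : x ∈ Set.Icc (0:ℝ) T := ⟨hx.1.le, hx.2.le⟩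
        rw [(hderiv x hx').deriv]
        have hVx : 0 < V x := hVpos x hx'
        have hd := hdV x hx.1.le
        have hE1 : 0 < Real.exp (-(a * (V x) ^ p)) := Real.exp_pos _
        have hE2 : 0 < Real.exp (a * (V x) ^ p) := Real.exp_pos _
        have hA : 0 < (V x) ^ (p - 1) := Real.rpow_pos_of_pos hVx _
        have hB : 0 < (V x) ^ (1 - p) := Real.rpow_pos_of_pos hVx _
        have hAB : (V x) ^ (p - 1) * (V x) ^ (1 - p) = 1 := by
          rw [← Real.rpow_add hVx]; norm_num
        have hEE : Real.exp (-(a * (V x) ^ p)) * Real.exp (a * (V x) ^ p) = 1 := by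
          rw [← Real.exp_add]; simp
        -- multiply hd by positive quantity
        have hc : 0 < Real.exp (-(a * (V x) ^ p)) * a * p * (V x) ^ (p - 1) := by positivity
        have h5 : Real.exp (-(a * (V x) ^ p)) * a * p * (V x) ^ (p - 1) * (deriv V x)
            ≤ Real.exp (-(a * (V x) ^ p)) * a * p * (V x) ^ (p - 1) *
              (-(1 / (p * T_c)) * Real.exp (a * (V x) ^ p) * (V x) ^ (1 - p)) :=
          mul_le_mul_of_nonneg_left hd hc.le
        have hrhs : Real.exp (-(a * (V x) ^ p)) * a * p * (V x) ^ (p - 1) *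
              (-(1 / (p * T_c)) * Real.exp (a * (V x) ^ p) * (V x) ^ (1 - p)) = -(a / T_c) := by
          rw [show Real.exp (-(a * (V x) ^ p)) * a * p * (V x) ^ (p - 1) *
              (-(1 / (p * T_c)) * Real.exp (a * (V x) ^ p) * (V x) ^ (1 - p)) =
              -(a * p * (1 / (p * T_c))) * (Real.exp (-(a * (V x) ^ p)) *
              Real.exp (a * (V x) ^ p)) * ((V x) ^ (p - 1) * (V x) ^ (1 - p)) from by ring,
            hEE, hAB]
          field_simp
        nlinarith [h5, hrhs]
    have hle : g 0 ≤ g T :=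
      hmono ⟨le_rfl, hTpos.le⟩ ⟨hTpos.le, le_rfl⟩ hTpos.le
    have hgT : (a / T_c) * T = 1 := by
      rw [hTdef]; field_simp
    have hexp0 : 0 < Real.exp (-(a * (V 0) ^ p)) := Real.exp_pos _
    have hexpT : Real.exp (-(a * (V T) ^ p)) ≤ 1 := by
      apply Real.exp_le_one_iff.2
      have : 0 ≤ a * (V T) ^ p := by positivity
      linarith
    simp only [hg] at hle
    rw [mul_zero] at hle
    nlinarith [hle, hgT, hexp0, hexpT]
  intro t ht
  have ht0 : (0:ℝ) ≤ t := le_trans hTpos.le ht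
  have h1 : V t ≤ V T := hanti (Set.mem_Ici.2 hTpos.le) (Set.mem_Ici.2 ht0) ht
  have h2 : 0 ≤ V t := hVnn t ht0
  linarith [hVT ▸ h1]
end

section
/- Let p ∈ (0,1) and let V_1, V_2, V_3 be nonnegative real numbers. Then Σ_{j=1}^{3} e^{V_j^p}·V_j^{1-p} ≥ e^{(1/3)·(V_1+V_2+V_3)^p}·(V_1+V_2+V_3)^{1-p}. -/
lemma real_rpow_add_le_add_rpow {x y p : ℝ} (hx : 0 ≤ x) (hy : 0 ≤ y)
    (hp : 0 ≤ p) (hp1 : p ≤ 1) : (x + y) ^ p ≤ x ^ p + y ^ p := by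
  have h := NNReal.rpow_add_le_add_rpow x.toNNReal y.toNNReal hp hp1
  have := NNReal.coe_le_coe.2 h
  push_cast [NNReal.coe_rpow] at this
  rwa [Real.coe_toNNReal x hx, Real.coe_toNNReal y hy] at this

lemma mono_prod {p : ℝ} (hp : p ∈ Set.Ioo (0:ℝ) 1) {a b : ℝ} (ha : 0 ≤ a) (hb : 0 ≤ b) :
    0 ≤ (Real.exp (a ^ p) - Real.exp (b ^ p)) * (a ^ (1 - p) - b ^ (1 - p)) := by
  rcases le_total a b with h | h
  · have h1 : Real.exp (a ^ p) ≤ Real.exp (b ^ p) :=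
      Real.exp_le_exp.2 (Real.rpow_le_rpow ha h hp.1.le)
    have h2 : a ^ (1 - p) ≤ b ^ (1 - p) :=
      Real.rpow_le_rpow ha h (by linarith [hp.2])
    nlinarith
  · have h1 : Real.exp (b ^ p) ≤ Real.exp (a ^ p) :=
      Real.exp_le_exp.2 (Real.rpow_le_rpow hb h hp.1.le)
    have h2 : b ^ (1 - p) ≤ a ^ (1 - p) :=
      Real.rpow_le_rpow hb h (by linarith [hp.2])
    nlinarith

theorem sum_exp_rpow_ge (p : ℝ) (hp : p ∈ Set.Ioo (0 : ℝ) 1)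
    (V₁ V₂ V₃ : ℝ) (h₁ : 0 ≤ V₁) (h₂ : 0 ≤ V₂) (h₃ : 0 ≤ V₃) :
    Real.exp (V₁ ^ p) * V₁ ^ (1 - p) + Real.exp (V₂ ^ p) * V₂ ^ (1 - p) +
        Real.exp (V₃ ^ p) * V₃ ^ (1 - p) ≥
      Real.exp ((1 / 3) * (V₁ + V₂ + V₃) ^ p) * (V₁ + V₂ + V₃) ^ (1 - p) := by
  obtain ⟨hp0, hp1⟩ := hp
  set a₁ := V₁ ^ p; set a₂ := V₂ ^ p; set a₃ := V₃ ^ p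
  set b₁ := V₁ ^ (1 - p); set b₂ := V₂ ^ (1 - p); set b₃ := V₃ ^ (1 - p)
  set S := V₁ + V₂ + V₃ with hS
  have hb₁ : 0 ≤ b₁ := Real.rpow_nonneg h₁ _
  have hb₂ : 0 ≤ b₂ := Real.rpow_nonneg h₂ _
  have hb₃ : 0 ≤ b₃ := Real.rpow_nonneg h₃ _
  -- subadditivity: S^p ≤ a₁+a₂+a₃ and S^{1-p} ≤ b₁+b₂+b₃
  have hsubp : S ^ p ≤ a₁ + a₂ + a₃ := by
    calc S ^ p ≤ (V₁ + V₂) ^ p + V₃ ^ p :=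
          real_rpow_add_le_add_rpow (by linarith) h₃ hp0.le hp1.le
      _ ≤ V₁ ^ p + V₂ ^ p + V₃ ^ p := by
          linarith [real_rpow_add_le_add_rpow h₁ h₂ hp0.le hp1.le]
  have hsubq : S ^ (1 - p) ≤ b₁ + b₂ + b₃ := by
    calc S ^ (1 - p) ≤ (V₁ + V₂) ^ (1 - p) + V₃ ^ (1 - p) :=
          real_rpow_add_le_add_rpow (by linarith) h₃ (by linarith) (by linarith)
      _ ≤ b₁ + b₂ + b₃ := by
          linarith [real_rpow_add_le_add_rpow h₁ h₂ (by linarith : (0:ℝ) ≤ 1 - p)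
            (by linarith : 1 - p ≤ 1)]
  -- Jensen: e₁+e₂+e₃ ≥ 3 exp(m) where m = (a₁+a₂+a₃)/3
  set m := (a₁ + a₂ + a₃) / 3 with hm
  have jensen : 3 * Real.exp m ≤ Real.exp a₁ + Real.exp a₂ + Real.exp a₃ := by
    have e₁ : Real.exp m * (1 + (a₁ - m)) ≤ Real.exp a₁ := by
      calc Real.exp m * (1 + (a₁ - m)) ≤ Real.exp m * Real.exp (a₁ - m) := by
            have := Real.add_one_le_exp (a₁ - m)
            nlinarith [Real.exp_pos m]
        _ = Real.exp a₁ := by rw [← Real.exp_add]; ring_nf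
    have e₂ : Real.exp m * (1 + (a₂ - m)) ≤ Real.exp a₂ := by
      calc Real.exp m * (1 + (a₂ - m)) ≤ Real.exp m * Real.exp (a₂ - m) := by
            have := Real.add_one_le_exp (a₂ - m)
            nlinarith [Real.exp_pos m]
        _ = Real.exp a₂ := by rw [← Real.exp_add]; ring_nf
    have e₃ : Real.exp m * (1 + (a₃ - m)) ≤ Real.exp a₃ := by
      calc Real.exp m * (1 + (a₃ - m)) ≤ Real.exp m * Real.exp (a₃ - m) := by
            have := Real.add_one_le_exp (a₃ - m)
            nlinarith [Real.exp_pos m]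
        _ = Real.exp a₃ := by rw [← Real.exp_add]; ring_nf
    have key : Real.exp m * (1 + (a₁ - m)) + Real.exp m * (1 + (a₂ - m)) +
        Real.exp m * (1 + (a₃ - m)) = 3 * Real.exp m := by rw [hm]; ring
    linarith
  -- Chebyshev
  have c12 := mono_prod ⟨hp0, hp1⟩ h₁ h₂
  have c13 := mono_prod ⟨hp0, hp1⟩ h₁ h₃
  have c23 := mono_prod ⟨hp0, hp1⟩ h₂ h₃
  have cheb : (Real.exp a₁ + Real.exp a₂ + Real.exp a₃) * (b₁ + b₂ + b₃) ≤
      3 * (Real.exp a₁ * b₁ + Real.exp a₂ * b₂ + Real.exp a₃ * b₃) := by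
    nlinarith [c12, c13, c23]
  -- chain
  have hexp1 : Real.exp ((1/3) * S ^ p) ≤ Real.exp m :=
    Real.exp_le_exp.2 (by rw [hm]; linarith)
  have step1 : Real.exp ((1/3) * S ^ p) * S ^ (1 - p) ≤ Real.exp m * (b₁ + b₂ + b₃) := by
    have hS1 : 0 ≤ S ^ (1 - p) := Real.rpow_nonneg (by linarith) _
    have := Real.exp_pos ((1/3) * S ^ p)
    nlinarith [Real.exp_pos m]
  have step2 : 3 * (Real.exp m * (b₁ + b₂ + b₃)) ≤
      (Real.exp a₁ + Real.exp a₂ + Real.exp a₃) * (b₁ + b₂ + b₃) := by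
    nlinarith [jensen, hb₁, hb₂, hb₃]
  have := step2.trans cheb
  linarith
end

section
/- Let δ > 0 and θ ∈ (0, π/2). Define g : (1-δ, 1+δ) → ℝ by g(z) = z + tan(θ)·tan((π/(2δ))·(z-1)). Then g is strictly monotonically increasing on (1-δ, 1+δ) and maps (1-δ, 1+δ) bijectively onto ℝ. In particular, for every z_s ∈ ℝ the equation z_0 + tan((π/(2δ))·(z_0-1))·tan(θ) = z_s has a unique solution z_0 ∈ (1-δ, 1+δ). (Global non-singularity of the shear mapping-based error transformation.) -/
open Real in
theorem shear_mapping_global_nonsingular (δ θ : ℝ) (hδ : 0 < δ)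
    (hθ : θ ∈ Set.Ioo (0 : ℝ) (π / 2)) :
    StrictMonoOn (fun z : ℝ => z + Real.tan θ * Real.tan (π / (2 * δ) * (z - 1)))
        (Set.Ioo (1 - δ) (1 + δ)) ∧
    Set.BijOn (fun z : ℝ => z + Real.tan θ * Real.tan (π / (2 * δ) * (z - 1)))
        (Set.Ioo (1 - δ) (1 + δ)) Set.univ ∧
    ∀ z_s : ℝ, ∃! z₀ : ℝ, z₀ ∈ Set.Ioo (1 - δ) (1 + δ) ∧
      z₀ + Real.tan (π / (2 * δ) * (z₀ - 1)) * Real.tan θ = z_s := by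
  have hπ : (0 : ℝ) < π := Real.pi_pos
  have hc : 0 < Real.tan θ := Real.tan_pos_of_pos_of_lt_pi_div_two hθ.1 hθ.2
  have hk : 0 < π / (2 * δ) := by positivity
  set g : ℝ → ℝ := fun z : ℝ => z + Real.tan θ * Real.tan (π / (2 * δ) * (z - 1)) with hg
  have hmem : ∀ z ∈ Set.Ioo (1 - δ) (1 + δ),
      π / (2 * δ) * (z - 1) ∈ Set.Ioo (-(π / 2)) (π / 2) := by
    intro z hz
    obtain ⟨h1, h2⟩ := hz
    constructor
    · rw [div_mul_eq_mul_div, lt_div_iff₀ (by positivity)]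
      nlinarith
    · rw [div_mul_eq_mul_div, div_lt_iff₀ (by positivity)]
      nlinarith
  have hmono : StrictMonoOn g (Set.Ioo (1 - δ) (1 + δ)) := by
    intro a ha b hb hab
    have ht : Real.tan (π / (2 * δ) * (a - 1)) < Real.tan (π / (2 * δ) * (b - 1)) :=
      Real.strictMonoOn_tan (hmem a ha) (hmem b hb)
        (by have := sub_lt_sub_right hab 1; exact mul_lt_mul_of_pos_left this hk)
    exact add_lt_add hab (mul_lt_mul_of_pos_left ht hc)
  -- surjectivity via the substitution z = 1 + (2δ/π) arctan t
  have hsurj : Set.SurjOn g (Set.Ioo (1 - δ) (1 + δ)) Set.univ := by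
    set f : ℝ → ℝ := fun t => 1 + 2 * δ / π * Real.arctan t + Real.tan θ * t with hf
    have hfc : Continuous f :=
      (continuous_const.add (continuous_const.mul Real.continuous_arctan)).add
        (continuous_const.mul continuous_id)
    have htop : Filter.Tendsto f Filter.atTop Filter.atTop := by
      apply Filter.tendsto_atTop_mono (f := fun t => (1 - δ) + Real.tan θ * t)
      · intro t
        have h1 : -(π/2) < Real.arctan t := Real.neg_pi_div_two_lt_arctan t
        have h2 : 0 < 2 * δ / π := by positivity
        have heq : 2 * δ / π * (-(π/2)) = -δ := by field_simp
        simp only [hf]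
        linarith [mul_lt_mul_of_pos_left h1 h2]
      · exact Filter.tendsto_atTop_add_const_left _ _
          (Filter.Tendsto.const_mul_atTop hc Filter.tendsto_id)
    have hbot : Filter.Tendsto f Filter.atBot Filter.atBot := by
      refine Filter.tendsto_atBot_mono (f := fun t => (1 + δ) + Real.tan θ * t)
        (fun t => ?_) ?_
      · have h1 : Real.arctan t < π/2 := Real.arctan_lt_pi_div_two t
        have h2 : 0 < 2 * δ / π := by positivity
        have heq : 2 * δ / π * (π/2) = δ := by field_simp
        simp only [hf]
        linarith [mul_lt_mul_of_pos_left h1 h2]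
      · exact Filter.tendsto_atBot_add_const_left _ _
          (Filter.Tendsto.const_mul_atBot hc Filter.tendsto_id)
    intro y _
    obtain ⟨t, ht⟩ := hfc.surjective htop hbot y
    refine ⟨1 + 2 * δ / π * Real.arctan t, ?_, ?_⟩
    · have h1 : -(π/2) < Real.arctan t := Real.neg_pi_div_two_lt_arctan t
      have h2 : Real.arctan t < π/2 := Real.arctan_lt_pi_div_two t
      have h3 : 0 < 2 * δ / π := by positivity
      have heq1 : 2 * δ / π * (-(π/2)) = -δ := by field_simp
      have heq2 : 2 * δ / π * (π/2) = δ := by field_simp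
      constructor
      · linarith [mul_lt_mul_of_pos_left h1 h3]
      · linarith [mul_lt_mul_of_pos_left h2 h3]
    · have harg : π / (2 * δ) * (1 + 2 * δ / π * Real.arctan t - 1) = Real.arctan t := by
        field_simp
        ring
      simp only [hg, harg, Real.tan_arctan]
      rw [← ht]
  have hbij : Set.BijOn g (Set.Ioo (1 - δ) (1 + δ)) Set.univ :=
    ⟨fun _ _ => trivial, hmono.injOn, hsurj⟩
  refine ⟨hmono, hbij, fun z_s => ?_⟩
  obtain ⟨z₀, hz₀, hz₀eq⟩ := hsurj (Set.mem_univ z_s)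
  refine ⟨z₀, ⟨hz₀, by rw [mul_comm]; exact hz₀eq⟩, ?_⟩
  intro y ⟨hy, hyeq⟩
  apply hmono.injOn hy hz₀
  show g y = g z₀
  rw [mul_comm] at hyeq
  exact hyeq.trans hz₀eq.symm
end

section
/- Let δ > 0 and θ ∈ (0, π/2). Let g : (1-δ, 1+δ) → ℝ, g(z) = z + tan(θ)·tan((π/(2δ))·(z-1)), which is a strictly increasing bijection onto ℝ, and let g⁻¹ : ℝ → (1-δ, 1+δ) denote its inverse. Fix z_0 ∈ (1-δ, 1+δ), set z_s = g(z_0) and ε = tan((π/(2δ))·(z_0-1)). Then the transformed-error function ε_s(w) = tan((π/(2δ))·(g⁻¹(w)-1)) is differentiable at z_s with derivative ε_s'(z_s) = P_0/(1 + P_0·tan(θ)) = π·(ε²+1)/(π·(ε²+1)·tan(θ) + 2δ), where P_0 = (π/(2δ))·(ε²+1). -/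
open Real in
theorem shear_mapping_derivative (δ θ : ℝ) (hδ : 0 < δ)
    (hθ : θ ∈ Set.Ioo (0 : ℝ) (π / 2))
    (g : ℝ → ℝ) (hg : ∀ z, g z = z + Real.tan θ * Real.tan (π / (2 * δ) * (z - 1)))
    (ginv : ℝ → ℝ)
    (hginv_mem : ∀ w, ginv w ∈ Set.Ioo (1 - δ) (1 + δ))
    (hginv_right : ∀ w, g (ginv w) = w)
    (hginv_left : ∀ z ∈ Set.Ioo (1 - δ) (1 + δ), ginv (g z) = z)
    (z₀ : ℝ) (hz₀ : z₀ ∈ Set.Ioo (1 - δ) (1 + δ))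
    (z_s ε : ℝ) (hzs : z_s = g z₀) (hε : ε = Real.tan (π / (2 * δ) * (z₀ - 1))) :
    HasDerivAt (fun w => Real.tan (π / (2 * δ) * (ginv w - 1)))
        (π * (ε ^ 2 + 1) / (π * (ε ^ 2 + 1) * Real.tan θ + 2 * δ)) z_s ∧
    π * (ε ^ 2 + 1) / (π * (ε ^ 2 + 1) * Real.tan θ + 2 * δ) =
      (π / (2 * δ) * (ε ^ 2 + 1)) /
        (1 + (π / (2 * δ) * (ε ^ 2 + 1)) * Real.tan θ) := by
  have hπ : (0 : ℝ) < π := Real.pi_pos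
  have hk : 0 < Real.tan θ := Real.tan_pos_of_pos_of_lt_pi_div_two hθ.1 hθ.2
  set εs : ℝ → ℝ := fun w => Real.tan (π / (2 * δ) * (ginv w - 1)) with hεs
  set h : ℝ → ℝ := fun e => 1 + 2 * δ / π * Real.arctan e + Real.tan θ * e with hh
  have key : ∀ w, h (εs w) = w := by
    intro w
    have hm := hginv_mem w
    set a : ℝ := π / (2 * δ) * (ginv w - 1) with ha
    have hc : (0 : ℝ) < π / (2 * δ) := by positivity
    have hδ' : δ ≠ 0 := ne_of_gt hδ
    have hpd : π / (2 * δ) * δ = π / 2 := by field_simp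
    have ha1 : -(π / 2) < a := by
      have h1 : -δ < ginv w - 1 := by
        have := hm.1; linarith
      have := (mul_lt_mul_iff_right₀ hc).2 h1
      rw [ha]; nlinarith
    have ha2 : a < π / 2 := by
      have h1 : ginv w - 1 < δ := by
        have := hm.2; linarith
      have := (mul_lt_mul_iff_right₀ hc).2 h1
      rw [ha]; nlinarith
    have harct : Real.arctan (Real.tan a) = a := Real.arctan_tan ha1 ha2
    have : h (εs w) = ginv w + Real.tan θ * Real.tan a := by
      simp only [hh, hεs, ← ha, harct]
      have hπ' : π ≠ 0 := ne_of_gt hπ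
      have hdd : δ * δ⁻¹ = 1 := mul_inv_cancel₀ hδ'
      field_simp
      linear_combination (π * ginv w - π) * hdd
    rw [this]
    have hgw := hg (ginv w)
    rw [← ha] at hgw
    rw [← hgw, hginv_right]
  have hmono : StrictMono h := by
    intro x y hxy
    have h1 : Real.arctan x < Real.arctan y := Real.arctan_strictMono hxy
    have h2 : Real.tan θ * x < Real.tan θ * y := (mul_lt_mul_iff_right₀ hk).2 hxy
    have hc : (0 : ℝ) < 2 * δ / π := by positivity
    have := (mul_lt_mul_iff_right₀ hc).2 h1
    simp only [hh]
    linarith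
  have hsurj : Function.Surjective h := fun w => ⟨εs w, key w⟩
  let iso := StrictMono.orderIsoOfSurjective h hmono hsurj
  have hεs_eq : εs = fun w => iso.symm w := by
    funext w
    apply hmono.injective
    have : iso (iso.symm w) = w := iso.apply_symm_apply w
    rw [key w]
    rw [show h (iso.symm w) = iso (iso.symm w) from rfl, this]
  have hcont : ContinuousAt εs z_s := by
    rw [hεs_eq]
    exact iso.symm.toHomeomorph.continuous.continuousAt
  have hεz : εs z_s = ε := by
    simp only [hεs, hzs, hginv_left z₀ hz₀, hε]
  have hd : (0 : ℝ) < 2 * δ / π * (1 / (1 + ε ^ 2)) + Real.tan θ := by positivity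
  have hderiv : HasDerivAt h (2 * δ / π * (1 / (1 + ε ^ 2)) + Real.tan θ) (εs z_s) := by
    rw [hεz]
    have h1 : HasDerivAt (fun e => 1 + 2 * δ / π * Real.arctan e)
        (2 * δ / π * (1 / (1 + ε ^ 2))) ε :=
      ((Real.hasDerivAt_arctan ε).const_mul (2 * δ / π)).const_add 1
    have h2 : HasDerivAt (fun e => Real.tan θ * e) (Real.tan θ) ε := by
      simpa using (hasDerivAt_id ε).const_mul (Real.tan θ)
    exact h1.add h2
  have hmain : HasDerivAt εs (2 * δ / π * (1 / (1 + ε ^ 2)) + Real.tan θ)⁻¹ z_s :=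
    HasDerivAt.of_local_left_inverse hcont hderiv (ne_of_gt hd)
      (Filter.Eventually.of_forall key)
  have he1 : (0 : ℝ) < 1 + ε ^ 2 := by positivity
  have hden : (0 : ℝ) < π * (ε ^ 2 + 1) * Real.tan θ + 2 * δ := by positivity
  have hval : (2 * δ / π * (1 / (1 + ε ^ 2)) + Real.tan θ)⁻¹ =
      π * (ε ^ 2 + 1) / (π * (ε ^ 2 + 1) * Real.tan θ + 2 * δ) := by
    rw [inv_eq_one_div, div_eq_div_iff hd.ne' hden.ne']
    have hπ' : π ≠ 0 := ne_of_gt hπ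
    have he1' : (1 : ℝ) + ε ^ 2 ≠ 0 := ne_of_gt he1
    field_simp
    ring
  constructor
  · exact hval ▸ hmain
  · have h2 : (0 : ℝ) < 1 + π / (2 * δ) * (ε ^ 2 + 1) * Real.tan θ := by positivity
    field_simp
    ring
end
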